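/- arXiv:1410.6242 — 3 statements merged into one kernel-verified Lean document; each statement's English description precedes it below -/
import Mathlib

section
/- Let (y, p) : ℝ → ℝ × ℝ be a differentiable solution of the system y'(t) = -p(t)·y(t), p'(t) = y(t)² - y(t) with initial values y(0) = 1 and p(0) = √(1 - 0.02). Then for every t ∈ ℝ, p(t)² ≤ 0.98 and (y(t) - 1)² ≤ 0.98; in particular both |y| and |p| are bounded along the solution. -/
/-- For the transformed Morse system `y' = -p y`, `p' = y² - y` with initial
values `y(0) = 1`, `p(0) = √(1 - 0.02)`, the solution satisfies `p(t)² ≤ 0.98`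
and `(y(t) - 1)² ≤ 0.98` for all `t`; in particular `|y|` and `|p|` are bounded. -/
theorem transformed_morse_solution_bounded
    (y p : ℝ → ℝ) (hy : Differentiable ℝ y) (hp : Differentiable ℝ p)
    (hode : ∀ t : ℝ, deriv y t = -p t * y t ∧ deriv p t = y t ^ 2 - y t)
    (hy0 : y 0 = 1) (hp0 : p 0 = Real.sqrt (1 - 0.02)) :
    ∀ t : ℝ, p t ^ 2 ≤ 0.98 ∧ (y t - 1) ^ 2 ≤ 0.98 := by
  set E : ℝ → ℝ := fun t => p t ^ 2 + y t ^ 2 - 2 * y t with hE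
  have hdiff : Differentiable ℝ E := by
    apply Differentiable.sub
    · exact (hp.pow 2).add (hy.pow 2)
    · exact hy.const_mul 2
  have hderiv : ∀ t, deriv E t = 0 := by
    intro t
    have h1 : HasDerivAt y (-p t * y t) t := by
      have := (hy t).hasDerivAt
      rwa [(hode t).1] at this
    have h2 : HasDerivAt p (y t ^ 2 - y t) t := by
      have := (hp t).hasDerivAt
      rwa [(hode t).2] at this
    have : HasDerivAt E (2 * p t ^ 1 * (y t ^ 2 - y t) +
        2 * y t ^ 1 * (-p t * y t) - 2 * (-p t * y t)) t := by
      exact ((h2.pow 2).add (h1.pow 2)).sub (h1.const_mul 2)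
    have h0 : (2 * p t ^ 1 * (y t ^ 2 - y t) +
        2 * y t ^ 1 * (-p t * y t) - 2 * (-p t * y t)) = 0 := by ring
    rw [h0] at this
    exact this.deriv
  have hconst : ∀ t, E t = E 0 :=
    fun t => is_const_of_deriv_eq_zero hdiff hderiv t 0
  have hE0 : E 0 = -0.02 := by
    simp only [hE, hy0, hp0]
    rw [Real.sq_sqrt (by norm_num : (1 : ℝ) - 0.02 ≥ 0)]
    norm_num
  intro t
  have ht : p t ^ 2 + (y t - 1) ^ 2 = 0.98 := by
    have := (hconst t).trans hE0
    simp only [hE] at this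
    nlinarith [this]
  constructor
  · nlinarith [sq_nonneg (y t - 1)]
  · nlinarith [sq_nonneg (p t)]
end

section
/- Let (y₀, p₀) ∈ ℝ × ℝ satisfy p₀²/2 + (1/2)(y₀² - 2y₀) < 0. Then there exists a unique differentiable function (y, p) : ℝ → ℝ × ℝ defined on all of ℝ with y(0) = y₀, p(0) = p₀ solving y'(t) = -p(t)·y(t), p'(t) = y(t)² - y(t); moreover the solution remains for all time in the compact set {(y, p) : p² + (y - 1)² ≤ 1 + 2H} where H = p₀²/2 + (1/2)(y₀² - 2y₀). -/
open Real Set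

/-- Energy conservation for any solution of the transformed Morse system. -/
lemma morse_energy_conserved (f : ℝ → ℝ × ℝ)
    (hf : ∀ t : ℝ, HasDerivAt f (-(f t).2 * (f t).1, (f t).1 ^ 2 - (f t).1) t) (t : ℝ) :
    (f t).2 ^ 2 + ((f t).1 - 1) ^ 2 = (f 0).2 ^ 2 + ((f 0).1 - 1) ^ 2 := by
  set E : ℝ → ℝ := fun s => (f s).2 ^ 2 + ((f s).1 - 1) ^ 2 with hEdef
  have hE : ∀ s : ℝ, HasDerivAt E 0 s := by
    intro s
    have h1 : HasDerivAt (fun u => (f u).1) (-(f s).2 * (f s).1) s := by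
      simpa [Function.comp_def] using (ContinuousLinearMap.fst ℝ ℝ ℝ).hasFDerivAt.comp_hasDerivAt s (hf s)
    have h2 : HasDerivAt (fun u => (f u).2) ((f s).1 ^ 2 - (f s).1) s := by
      simpa [Function.comp_def] using (ContinuousLinearMap.snd ℝ ℝ ℝ).hasFDerivAt.comp_hasDerivAt s (hf s)
    have := ((h2.pow 2).add (((h1.sub_const 1)).pow 2))
    refine this.congr_deriv (Eq.symm ?_)
    ring
  have := is_const_of_deriv_eq_zero (f := E)
    (fun s => (hE s).differentiableAt) (fun s => (hE s).deriv) t 0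
  exact this


lemma morse_lipschitz :
    LipschitzOnWith 4 (fun x : ℝ × ℝ => (-x.2 * x.1, x.1 ^ 2 - x.1))
      {x : ℝ × ℝ | x.2 ^ 2 + (x.1 - 1) ^ 2 ≤ 1} := by
  apply LipschitzOnWith.of_dist_le_mul
  intro x hx y hy
  simp only [Set.mem_setOf_eq] at hx hy
  have hx1 : |x.1 - 1| ≤ 1 := by nlinarith [abs_nonneg (x.1-1), sq_abs (x.1-1)]
  have hy1 : |y.1 - 1| ≤ 1 := by nlinarith [abs_nonneg (y.1-1), sq_abs (y.1-1)]
  have hx2 : |x.2| ≤ 1 := by nlinarith [abs_nonneg x.2, sq_abs x.2]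
  have hy2 : |y.2| ≤ 1 := by nlinarith [abs_nonneg y.2, sq_abs y.2]
  have hx1' : |x.1| ≤ 2 := by have := abs_sub_abs_le_abs_sub x.1 1; simp at this ⊢; linarith [hx1]
  have hy1' : |y.1| ≤ 2 := by have := abs_sub_abs_le_abs_sub y.1 1; simp at this ⊢; linarith [hy1]
  rw [Prod.dist_eq, Prod.dist_eq] at *
  simp only [Real.dist_eq] at *
  have hd1 : |x.1 - y.1| ≤ max |x.1 - y.1| |x.2 - y.2| := le_max_left _ _
  have hd2 : |x.2 - y.2| ≤ max |x.1 - y.1| |x.2 - y.2| := le_max_right _ _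
  have hdn : (0:ℝ) ≤ max |x.1 - y.1| |x.2 - y.2| := le_trans (abs_nonneg _) hd1
  rw [max_le_iff]
  push_cast
  constructor
  · have : -x.2 * x.1 - -y.2 * y.1 = (-x.2) * (x.1 - y.1) + (y.1) * (y.2 - x.2) := by ring
    rw [this]
    calc |(-x.2) * (x.1 - y.1) + (y.1) * (y.2 - x.2)|
        ≤ |(-x.2) * (x.1 - y.1)| + |(y.1) * (y.2 - x.2)| := abs_add_le _ _
      _ = |x.2| * |x.1 - y.1| + |y.1| * |y.2 - x.2| := by rw [abs_mul, abs_mul, abs_neg]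
      _ ≤ 1 * max |x.1 - y.1| |x.2 - y.2| + 2 * max |x.1 - y.1| |x.2 - y.2| := by
          rw [abs_sub_comm y.2 x.2]
          gcongr
      _ ≤ 4 * max |x.1 - y.1| |x.2 - y.2| := by linarith
  · have : x.1 ^ 2 - x.1 - (y.1 ^ 2 - y.1) = (x.1 + y.1 - 1) * (x.1 - y.1) := by ring
    rw [this, abs_mul]
    have : |x.1 + y.1 - 1| ≤ 4 := by
      rw [abs_le] at hx1 hy1 ⊢
      constructor <;> linarith
    calc |x.1 + y.1 - 1| * |x.1 - y.1| ≤ 4 * |x.1 - y.1| := by gcongr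
      _ ≤ 4 * max |x.1 - y.1| |x.2 - y.2| := by gcongr

lemma morse_exists (y₀ p₀ : ℝ) (hH : p₀ ^ 2 / 2 + (1 / 2) * (y₀ ^ 2 - 2 * y₀) < 0) :
    ∃ f : ℝ → ℝ × ℝ,
      (∀ t : ℝ, HasDerivAt f (-(f t).2 * (f t).1, (f t).1 ^ 2 - (f t).1) t) ∧
      f 0 = (y₀, p₀) := by
  obtain ⟨ε, hεdef⟩ : ∃ ε : ℝ, ε = -(p₀ ^ 2 + y₀ ^ 2 - 2 * y₀) := ⟨_, rfl⟩
  have hε : 0 < ε := by rw [hεdef]; nlinarith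
  have hy₀ : 0 < y₀ := by nlinarith [sq_nonneg p₀, sq_nonneg (y₀ - 2)]
  obtain ⟨ω, hω2, hω⟩ : ∃ ω : ℝ, ω ^ 2 = ε ∧ 0 < ω :=
    ⟨Real.sqrt ε, Real.sq_sqrt hε.le, Real.sqrt_pos.mpr hε⟩
  obtain ⟨a, hadef⟩ : ∃ a : ℝ, a = 1 / y₀ - 1 / ε := ⟨_, rfl⟩
  obtain ⟨b, hbdef⟩ : ∃ b : ℝ, b = p₀ / (ω * y₀) := ⟨_, rfl⟩
  set z : ℝ → ℝ := fun t => 1 / ε + a * Real.cos (ω * t) + b * Real.sin (ω * t) with hzdef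
  set w : ℝ → ℝ := fun t => ω * (-a * Real.sin (ω * t) + b * Real.cos (ω * t)) with hwdef
  have hlin : ∀ t : ℝ, HasDerivAt (fun u : ℝ => ω * u) ω t := by
    intro t; simpa using (hasDerivAt_id t).const_mul ω
  have hz' : ∀ t, HasDerivAt z (w t) t := by
    intro t
    have hc : HasDerivAt (fun u => Real.cos (ω * u)) (-Real.sin (ω * t) * ω) t := (hlin t).cos
    have hs : HasDerivAt (fun u => Real.sin (ω * u)) (Real.cos (ω * t) * ω) t := (hlin t).sin
    have := ((hasDerivAt_const t (1/ε)).add (hc.const_mul a)).add (hs.const_mul b)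
    refine this.congr_deriv (Eq.symm ?_)
    simp only [hwdef]; ring
  have hw' : ∀ t, HasDerivAt w (1 - ε * z t) t := by
    intro t
    have hc : HasDerivAt (fun u => Real.cos (ω * u)) (-Real.sin (ω * t) * ω) t := (hlin t).cos
    have hs : HasDerivAt (fun u => Real.sin (ω * u)) (Real.cos (ω * t) * ω) t := (hlin t).sin
    have := ((hs.const_mul (-a)).add (hc.const_mul b)).const_mul ω
    refine this.congr_deriv (Eq.symm ?_)
    simp only [hzdef]
    field_simp
    linear_combination (a * Real.cos (ω * t) + b * Real.sin (ω * t)) * hω2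
  have hz0 : z 0 = 1 / y₀ := by simp [hzdef, hadef]
  have hw0 : w 0 = p₀ / y₀ := by
    simp only [hwdef, hbdef]
    simp [Real.cos_zero, Real.sin_zero]
    field_simp
  have hE0 : ∀ t, w t ^ 2 + ε * z t ^ 2 - 2 * z t + 1 = 0 := by
    have hE' : ∀ t, HasDerivAt (fun t => w t ^ 2 + ε * z t ^ 2 - 2 * z t + 1) 0 t := by
      intro t
      have := ((((hw' t).pow 2).add (((hz' t).pow 2).const_mul ε)).sub
        ((hz' t).const_mul 2)).add_const 1
      refine this.congr_deriv (Eq.symm ?_)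
      ring
    have hconst := is_const_of_deriv_eq_zero (f := fun t => w t ^ 2 + ε * z t ^ 2 - 2 * z t + 1)
      (fun s => (hE' s).differentiableAt) (fun s => (hE' s).deriv)
    intro t
    have h0 : w 0 ^ 2 + ε * z 0 ^ 2 - 2 * z 0 + 1 = 0 := by
      rw [hz0, hw0]
      field_simp
      linear_combination hεdef
    have := hconst t 0
    rw [h0] at this
    exact this
  have hzpos : ∀ t, 0 < z t := by
    intro t
    by_contra h
    push_neg at h
    nlinarith [sq_nonneg (w t), hE0 t]
  clear_value z w
  refine ⟨fun t => (1 / z t, w t / z t), ?_, ?_⟩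
  · intro t
    have hne := (hzpos t).ne'
    have h1 : HasDerivAt (fun u => 1 / z u) ((0 * z t - 1 * w t) / z t ^ 2) t :=
      (hasDerivAt_const t 1).div (hz' t) hne
    have h2 : HasDerivAt (fun u => w u / z u) (((1 - ε * z t) * z t - w t * w t) / z t ^ 2) t :=
      (hw' t).div (hz' t) hne
    have key := h1.prodMk h2
    have e1 : -(w t / z t) * (1 / z t) = (0 * z t - 1 * w t) / z t ^ 2 := by
      field_simp
      ring
    have e2 : (1 / z t) ^ 2 - 1 / z t = ((1 - ε * z t) * z t - w t * w t) / z t ^ 2 := by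
      have hnum : (1 - ε * z t) * z t - w t * w t = 1 - z t := by linear_combination -hE0 t
      rw [hnum, eq_div_iff (pow_ne_zero 2 hne)]
      field_simp
    show HasDerivAt (fun t => (1 / z t, w t / z t))
      (-(w t / z t) * (1 / z t), (1 / z t) ^ 2 - 1 / z t) t
    rw [e1, e2]
    exact key
  · simp only [hz0, hw0]
    rw [Prod.mk.injEq]
    constructor <;> field_simp


/-- Any two global solutions with the same initial condition of negative energy agree. -/
lemma morse_unique (y₀ p₀ : ℝ) (hH : p₀ ^ 2 / 2 + (1 / 2) * (y₀ ^ 2 - 2 * y₀) < 0)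
    (f g : ℝ → ℝ × ℝ)
    (hf : ∀ t : ℝ, HasDerivAt f (-(f t).2 * (f t).1, (f t).1 ^ 2 - (f t).1) t)
    (hf0 : f 0 = (y₀, p₀))
    (hg : ∀ t : ℝ, HasDerivAt g (-(g t).2 * (g t).1, (g t).1 ^ 2 - (g t).1) t)
    (hg0 : g 0 = (y₀, p₀)) : f = g := by
  have hmemf : ∀ t : ℝ, f t ∈ {x : ℝ × ℝ | x.2 ^ 2 + (x.1 - 1) ^ 2 ≤ 1} := by
    intro t
    have := morse_energy_conserved f hf t
    rw [hf0] at this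
    simp only [Set.mem_setOf_eq, this]
    nlinarith
  have hmemg : ∀ t : ℝ, g t ∈ {x : ℝ × ℝ | x.2 ^ 2 + (x.1 - 1) ^ 2 ≤ 1} := by
    intro t
    have := morse_energy_conserved g hg t
    rw [hg0] at this
    simp only [Set.mem_setOf_eq, this]
    nlinarith
  funext t
  have ht0 : (0 : ℝ) ∈ Set.Ioo (-(|t| + 1)) (|t| + 1) := by
    constructor <;> [linarith [abs_nonneg t]; linarith [abs_nonneg t]]
  have htt : t ∈ Set.Ioo (-(|t| + 1)) (|t| + 1) := by
    constructor <;> [linarith [neg_abs_le t]; linarith [le_abs_self t]]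
  exact ODE_solution_unique_of_mem_Ioo
    (v := fun _ x => (-x.2 * x.1, x.1 ^ 2 - x.1))
    (s := fun _ => {x : ℝ × ℝ | x.2 ^ 2 + (x.1 - 1) ^ 2 ≤ 1})
    (fun _ _ => morse_lipschitz) ht0
    (fun u _ => ⟨hf u, hmemf u⟩) (fun u _ => ⟨hg u, hmemg u⟩)
    (by rw [hf0, hg0]) htt

/-- For negative energy `H = p₀²/2 + (1/2)(y₀² - 2y₀) < 0`, the transformed Morse
system `y' = -p y`, `p' = y² - y` with initial data `(y₀, p₀)` has a unique
globally defined differentiable solution, and every such solution remains in the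
compact set `{(y, p) : p² + (y - 1)² ≤ 1 + 2H}`. -/
theorem transformed_morse_global_existence_unique
    (y₀ p₀ : ℝ) (hH : p₀ ^ 2 / 2 + (1 / 2) * (y₀ ^ 2 - 2 * y₀) < 0) :
    (∃! f : ℝ → ℝ × ℝ,
        (∀ t : ℝ, HasDerivAt f (-(f t).2 * (f t).1, (f t).1 ^ 2 - (f t).1) t) ∧
        f 0 = (y₀, p₀)) ∧
    ∀ f : ℝ → ℝ × ℝ,
      ((∀ t : ℝ, HasDerivAt f (-(f t).2 * (f t).1, (f t).1 ^ 2 - (f t).1) t) ∧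
        f 0 = (y₀, p₀)) →
      ∀ t : ℝ, (f t).2 ^ 2 + ((f t).1 - 1) ^ 2 ≤
        1 + 2 * (p₀ ^ 2 / 2 + (1 / 2) * (y₀ ^ 2 - 2 * y₀)) := by
  constructor
  · obtain ⟨f, hf, hf0⟩ := morse_exists y₀ p₀ hH
    exact ⟨f, ⟨hf, hf0⟩, fun g ⟨hg, hg0⟩ => morse_unique y₀ p₀ hH g f hg hg0 hf hf0⟩
  · rintro f ⟨hf, hf0⟩ t
    have := morse_energy_conserved f hf t
    rw [hf0] at this
    rw [this]
    ring_nf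
    linarith
end

section
/- Let (y, p) : ℝ → ℝ × ℝ be the differentiable solution on all of ℝ of the system y'(t) = -p(t)·y(t), p'(t) = y(t)² - y(t) with y(0) = 1 and p(0) = √(1 - 0.02). Then the solution is periodic, and its least positive period equals T = 10·√2·π (numerically T = 44.42882938158366247015880990060693698614…). -/
open Real

noncomputable def mOm : ℝ := Real.sqrt 2 / 10

lemma mOm_pos : 0 < mOm := by
  unfold mOm
  positivity

lemma mOm_sq : mOm ^ 2 = 1 / 50 := by
  unfold mOm
  rw [div_pow, sq_sqrt (by norm_num : (2:ℝ) ≥ 0)]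
  norm_num

noncomputable def mU (t : ℝ) : ℝ := 50 - 49 * Real.cos (mOm * t) + 7 * Real.sin (mOm * t)
noncomputable def mU' (t : ℝ) : ℝ := 49 * mOm * Real.sin (mOm * t) + 7 * mOm * Real.cos (mOm * t)

lemma mU_pos (t : ℝ) : 0 < mU t := by
  unfold mU
  have pyth := Real.sin_sq_add_cos_sq (mOm * t)
  nlinarith [sq_nonneg (7 * Real.cos (mOm*t) + 49 * Real.sin (mOm*t)),
    sq_nonneg (49 * Real.cos (mOm*t) - 7 * Real.sin (mOm*t) - 50)]

lemma hasDerivAt_mU (t : ℝ) : HasDerivAt mU (mU' t) t := by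
  have hlin : HasDerivAt (fun t : ℝ => mOm * t) mOm t := by
    simpa using (hasDerivAt_id t).const_mul mOm
  have hc : HasDerivAt (fun t : ℝ => Real.cos (mOm * t)) (-Real.sin (mOm*t) * mOm) t :=
    (Real.hasDerivAt_cos (mOm*t)).comp t hlin
  have hs : HasDerivAt (fun t : ℝ => Real.sin (mOm * t)) (Real.cos (mOm*t) * mOm) t :=
    (Real.hasDerivAt_sin (mOm*t)).comp t hlin
  have := ((hc.const_mul (49:ℝ)).const_sub 50).add (hs.const_mul (7:ℝ))
  refine this.congr_deriv ?_
  unfold mU'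
  ring

lemma hasDerivAt_mU' (t : ℝ) : HasDerivAt mU' (mOm ^ 2 * (50 - mU t)) t := by
  have hlin : HasDerivAt (fun t : ℝ => mOm * t) mOm t := by
    simpa using (hasDerivAt_id t).const_mul mOm
  have hc : HasDerivAt (fun t : ℝ => Real.cos (mOm * t)) (-Real.sin (mOm*t) * mOm) t :=
    (Real.hasDerivAt_cos (mOm*t)).comp t hlin
  have hs : HasDerivAt (fun t : ℝ => Real.sin (mOm * t)) (Real.cos (mOm*t) * mOm) t :=
    (Real.hasDerivAt_sin (mOm*t)).comp t hlin
  have := (hs.const_mul (49 * mOm)).add (hc.const_mul (7 * mOm))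
  refine this.congr_deriv ?_
  unfold mU
  ring

noncomputable def mV (t : ℝ) : ℝ := (mU t)⁻¹
noncomputable def mQ (t : ℝ) : ℝ := mU' t / mU t

lemma hasDerivAt_mV (t : ℝ) : HasDerivAt mV (-mQ t * mV t) t := by
  have h := (hasDerivAt_mU t).inv (mU_pos t).ne'
  refine h.congr_deriv ?_
  unfold mQ mV
  field_simp

lemma key_identity (t : ℝ) : mOm ^ 2 * (50 - mU t) * mU t - mU' t ^ 2 = 1 - mU t := by
  have pyth := Real.sin_sq_add_cos_sq (mOm * t)
  have h2 := mOm_sq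
  unfold mU mU'
  set c := Real.cos (mOm*t)
  set s := Real.sin (mOm*t)
  linear_combination (((50 - (50 - 49*c + 7*s)) * (50 - 49*c + 7*s)) - (49*s+7*c)^2) * h2 + (-49 : ℝ) * pyth

lemma hasDerivAt_mQ (t : ℝ) : HasDerivAt mQ (mV t ^ 2 - mV t) t := by
  have h := (hasDerivAt_mU' t).div (hasDerivAt_mU t) (mU_pos t).ne'
  refine h.congr_deriv ?_
  unfold mV
  have hne := (mU_pos t).ne'
  rw [show mOm^2*(50-mU t)*mU t - mU' t * mU' t = 1 - mU t by linear_combination key_identity t]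
  field_simp

lemma mU_zero : mU 0 = 1 := by
  unfold mU
  simp; norm_num

lemma mU'_zero : mU' 0 = 7 * mOm := by
  unfold mU'
  simp

lemma sqrt_098 : Real.sqrt (1 - 0.02) = 7 * mOm := by
  unfold mOm
  rw [show (1 - 0.02 : ℝ) = (7 * (Real.sqrt 2 / 10))^2 by
    rw [mul_pow, div_pow, sq_sqrt (by norm_num : (2:ℝ) ≥ 0)]; norm_num]
  exact Real.sqrt_sq (by positivity)

lemma mV_zero : mV 0 = 1 := by unfold mV; rw [mU_zero]; norm_num

lemma mQ_zero : mQ 0 = 7 * mOm := by unfold mQ; rw [mU_zero, mU'_zero]; norm_num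

lemma omega_T : mOm * (10 * Real.sqrt 2 * Real.pi) = 2 * Real.pi := by
  unfold mOm
  have h : Real.sqrt 2 * Real.sqrt 2 = 2 := Real.mul_self_sqrt (by norm_num)
  field_simp
  linear_combination h

lemma mU_periodic (t : ℝ) : mU (t + 10 * Real.sqrt 2 * Real.pi) = mU t := by
  unfold mU
  rw [mul_add, omega_T, Real.cos_add_two_pi, Real.sin_add_two_pi]

lemma mU'_periodic (t : ℝ) : mU' (t + 10 * Real.sqrt 2 * Real.pi) = mU' t := by
  unfold mU'
  rw [mul_add, omega_T, Real.cos_add_two_pi, Real.sin_add_two_pi]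

/-- Energy conservation for solutions of the Morse system. -/
lemma morse_energy (f g : ℝ → ℝ)
    (hode : ∀ t, HasDerivAt f (-g t * f t) t ∧ HasDerivAt g (f t ^ 2 - f t) t) (t : ℝ) :
    g t ^ 2 + (f t - 1) ^ 2 = g 0 ^ 2 + (f 0 - 1) ^ 2 := by
  have hE : ∀ s : ℝ, HasDerivAt (fun r => g r ^ 2 + (f r - 1) ^ 2) 0 s := by
    intro s
    have h1 := ((hode s).2.pow 2)
    have h2 := (((hode s).1.sub_const 1).pow 2)
    have := h1.add h2
    refine this.congr_deriv ?_
    simp only [Nat.cast_ofNat]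
    ring
  exact is_const_of_deriv_eq_zero (fun s => (hE s).differentiableAt)
    (fun s => (hE s).deriv) t 0

/-- The vector field of the Morse system. -/
def morseF : ℝ × ℝ → ℝ × ℝ := fun z => (-z.2 * z.1, z.1 ^ 2 - z.1)

/-- The invariant region. -/
def morseS : Set (ℝ × ℝ) := {z | |z.1 - 1| ≤ 1 ∧ |z.2| ≤ 1}

lemma morseF_lip : LipschitzOnWith 5 morseF morseS := by
  rw [lipschitzOnWith_iff_dist_le_mul]
  rintro ⟨a, b⟩ ⟨ha, hb⟩ ⟨c, d⟩ ⟨hc, hd⟩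
  simp only [morseF, Prod.dist_eq, Real.dist_eq] at *
  have h1 : |a - c| ≤ max |a - c| |b - d| := le_max_left _ _
  have h2 : |b - d| ≤ max |a - c| |b - d| := le_max_right _ _
  rw [max_le_iff]
  push_cast
  constructor
  · have : -b * a - -d * c = (-b) * (a - c) + (-c) * (b - d) := by ring
    rw [this]
    calc |(-b) * (a - c) + (-c) * (b - d)| ≤ |(-b) * (a-c)| + |(-c) * (b-d)| := abs_add_le _ _
      _ = |b| * |a-c| + |c| * |b-d| := by rw [abs_mul, abs_mul, abs_neg, abs_neg]
      _ ≤ 1 * |a-c| + 2 * |b-d| := by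
          have hcabs : |c| ≤ 2 := by
            have := abs_abs_sub_abs_le_abs_sub c 1
            have h1' : |c| - 1 ≤ |c - 1| := by
              calc |c| - 1 = |c| - |(1:ℝ)| := by norm_num
                _ ≤ |c - 1| := abs_sub_abs_le_abs_sub c 1
            linarith
          gcongr
      _ ≤ 1 * max |a-c| |b-d| + 2 * max |a-c| |b-d| := by gcongr
      _ ≤ (5:ℝ) * max |a-c| |b-d| := by nlinarith [abs_nonneg (a-c), abs_nonneg (b-d), le_max_left |a-c| |b-d|]
  · have : a^2 - a - (c^2 - c) = (a + c - 1) * (a - c) := by ring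
    rw [this, abs_mul]
    have habs : |a + c - 1| ≤ 3 := by
      have haa : |a| ≤ 2 := by
        have h1' : |a| - 1 ≤ |a - 1| := by
          calc |a| - 1 = |a| - |(1:ℝ)| := by norm_num
            _ ≤ |a - 1| := abs_sub_abs_le_abs_sub a 1
        linarith
      have hcc : |c| ≤ 2 := by
        have h1' : |c| - 1 ≤ |c - 1| := by
          calc |c| - 1 = |c| - |(1:ℝ)| := by norm_num
            _ ≤ |c - 1| := abs_sub_abs_le_abs_sub c 1
        linarith
      calc |a + c - 1| ≤ |a - 1| + |c| := by
            have : a + c - 1 = (a - 1) + c := by ring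
            rw [this]; exact abs_add_le _ _
        _ ≤ 3 := by linarith
    calc |a + c - 1| * |a - c| ≤ 3 * |a - c| := by gcongr
      _ ≤ 3 * max |a-c| |b-d| := by gcongr
      _ ≤ (5:ℝ) * max |a-c| |b-d| := by nlinarith [abs_nonneg (a-c), abs_nonneg (b-d), le_max_left |a-c| |b-d|]

/-- The solution of the transformed Morse system `y' = -p y`, `p' = y² - y` with
`y(0) = 1`, `p(0) = √(1 - 0.02)` is periodic, with least positive period
`T = 10·√2·π = 44.42882938158366247015880990060693698614…`. -/
theorem transformed_morse_least_period
    (y p : ℝ → ℝ) (hy : Differentiable ℝ y) (hp : Differentiable ℝ p)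
    (hode : ∀ t : ℝ, deriv y t = -p t * y t ∧ deriv p t = y t ^ 2 - y t)
    (hy0 : y 0 = 1) (hp0 : p 0 = Real.sqrt (1 - 0.02)) :
    IsLeast {T : ℝ | 0 < T ∧ Function.Periodic (fun t => (y t, p t)) T}
      (10 * Real.sqrt 2 * Real.pi) := by
  have hp0' : p 0 = 7 * mOm := by rw [hp0, sqrt_098]
  -- HasDerivAt versions of the ODE
  have hODEyp : ∀ t, HasDerivAt y (-p t * y t) t ∧ HasDerivAt p (y t ^ 2 - y t) t := by
    intro t
    constructor
    · have := (hy t).hasDerivAt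
      rwa [(hode t).1] at this
    · have := (hp t).hasDerivAt
      rwa [(hode t).2] at this
  have hODEvq : ∀ t, HasDerivAt mV (-mQ t * mV t) t ∧ HasDerivAt mQ (mV t ^ 2 - mV t) t :=
    fun t => ⟨hasDerivAt_mV t, hasDerivAt_mQ t⟩
  -- energy conservation
  have hmOmsq := mOm_sq
  have hEyp : ∀ t, p t ^ 2 + (y t - 1) ^ 2 = 49 / 50 := by
    intro t
    have := morse_energy y p hODEyp t
    rw [hy0, hp0'] at this
    rw [this]
    nlinarith [hmOmsq]
  have hEvq : ∀ t, mQ t ^ 2 + (mV t - 1) ^ 2 = 49 / 50 := by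
    intro t
    have := morse_energy mV mQ hODEvq t
    rw [mV_zero, mQ_zero] at this
    rw [this]
    nlinarith [hmOmsq]
  -- membership in the invariant region
  have hmem : ∀ (f g : ℝ → ℝ), (∀ t, g t ^ 2 + (f t - 1) ^ 2 = 49 / 50) →
      ∀ t, (f t, g t) ∈ morseS := by
    intro f g hE t
    have h := hE t
    constructor
    · rw [abs_le]
      constructor <;> nlinarith [sq_nonneg (g t), sq_nonneg (f t - 1)]
    · rw [abs_le]
      constructor <;> nlinarith [sq_nonneg (g t), sq_nonneg (f t - 1)]
  -- uniqueness of the solution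
  have hkey : ∀ t, (y t, p t) = (mV t, mQ t) := by
    intro t
    have hb0 : (0:ℝ) ∈ Set.Ioo (-(|t|+1)) (|t|+1) :=
      ⟨by nlinarith [abs_nonneg t], by positivity⟩
    have hbt : t ∈ Set.Ioo (-(|t|+1)) (|t|+1) := by
      constructor
      · nlinarith [neg_abs_le t]
      · nlinarith [le_abs_self t]
    have := ODE_solution_unique_of_mem_Ioo (v := fun _ => morseF) (s := fun _ => morseS)
      (K := 5) (fun _ _ => morseF_lip) hb0
      (f := fun t => (y t, p t)) (g := fun t => (mV t, mQ t))
      (fun r _ => ⟨((hODEyp r).1.prodMk (hODEyp r).2), hmem y p hEyp r⟩)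
      (fun r _ => ⟨((hODEvq r).1.prodMk (hODEvq r).2), hmem mV mQ hEvq r⟩)
      (by simp only [hy0, hp0', mV_zero, mQ_zero])
    exact this hbt
  have hyv : ∀ t, y t = mV t := fun t => congrArg Prod.fst (hkey t)
  have hpq : ∀ t, p t = mQ t := fun t => congrArg Prod.snd (hkey t)
  constructor
  · constructor
    · have := Real.pi_pos
      have := Real.sqrt_pos.mpr (show (0:ℝ) < 2 by norm_num)
      positivity
    · intro t
      simp only [hyv, hpq]
      unfold mV mQ
      rw [mU_periodic, mU'_periodic]
  · rintro T' ⟨hT'pos, hper⟩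
    have h0 := hper 0
    simp only [zero_add] at h0
    have hyT : y T' = 1 := by
      have := congrArg Prod.fst h0; simpa [hy0] using this
    have hpT : p T' = 7 * mOm := by
      have := congrArg Prod.snd h0; simpa [hp0'] using this
    have huT : mU T' = 1 := by
      have := (hyv T').symm.trans hyT
      unfold mV at this
      exact inv_eq_one.mp this
    have huT' : mU' T' = 7 * mOm := by
      have := (hpq T').symm.trans hpT
      unfold mQ at this
      rw [huT, div_one] at this
      exact this
    set c := Real.cos (mOm * T') with hc_def
    set s := Real.sin (mOm * T') with hs_def
    have e1 : 50 - 49 * c + 7 * s = 1 := huT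
    have e2 : 49 * mOm * s + 7 * mOm * c = 7 * mOm := huT'
    have e2' : 49 * s + 7 * c = 7 := by
      have hOm := mOm_pos
      have : mOm * (49 * s + 7 * c) = mOm * 7 := by ring_nf; ring_nf at e2; linarith
      exact mul_left_cancel₀ hOm.ne' this
    have hs : s = 0 := by linarith
    have hc : c = 1 := by linarith
    obtain ⟨n, hn⟩ := (Real.cos_eq_one_iff (mOm * T')).mp hc
    have hpi := Real.pi_pos
    have hOm := mOm_pos
    have hnpos : (1:ℝ) ≤ (n:ℝ) := by
      have h1 : (0:ℝ) < (n:ℝ) * (2 * Real.pi) := hn ▸ (by positivity)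
      have h2 : (0:ℝ) < (n:ℝ) := by nlinarith
      exact_mod_cast Int.cast_pos.mp h2
    have h3 : mOm * (10 * Real.sqrt 2 * Real.pi) ≤ mOm * T' := by
      rw [omega_T, ← hn]
      nlinarith
    exact le_of_mul_le_mul_left h3 hOm
end
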